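/- Every real root of the polynomial g(n) = ∏_{j=d-k+1}^{d}(n+j) + m·∏_{j=0}^{k-1}(n-j), where m ≥ 1, d ≥ 2, 1 ≤ k ≤ d, lies in the open interval (-d, k-1) ⊆ (-d, d-1). Hence all real roots of f(n) = C(n+d,d) + m·C(n+d-k,d) lie in [-d+1, d-1]. -/

import Mathlib

open Finset

private lemma prod_lt_prod_aux {s : Finset ℕ} (hs : s.Nonempty) (f g : ℕ → ℝ)
    (h0 : ∀ i ∈ s, 0 ≤ f i) (h : ∀ i ∈ s, f i < g i) :
    ∏ i ∈ s, f i < ∏ i ∈ s, g i := by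
  obtain ⟨a, ha⟩ := hs
  have hg0 : ∀ i ∈ s.erase a, 0 < g i := fun i hi =>
    lt_of_le_of_lt (h0 i (mem_of_mem_erase hi)) (h i (mem_of_mem_erase hi))
  rw [← Finset.prod_erase_mul s f ha, ← Finset.prod_erase_mul s g ha]
  calc (∏ i ∈ s.erase a, f i) * f a
      ≤ (∏ i ∈ s.erase a, g i) * f a := by
        apply mul_le_mul_of_nonneg_right _ (h0 a ha)
        exact Finset.prod_le_prod (fun i hi => h0 i (mem_of_mem_erase hi))
          (fun i hi => le_of_lt (h i (mem_of_mem_erase hi)))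
    _ < (∏ i ∈ s.erase a, g i) * g a :=
        mul_lt_mul_of_pos_left (h a ha) (Finset.prod_pos hg0)

theorem stmt_14 (m d k : ℕ) (hm : 1 ≤ m) (hd : 2 ≤ d) (hk1 : 1 ≤ k) (hkd : k ≤ d)
    (g f : ℝ → ℝ)
    (hg : ∀ x : ℝ, g x = (∏ j ∈ Finset.Icc (d - k + 1) d, (x + (j : ℝ)))
        + m * ∏ j ∈ Finset.range k, (x - (j : ℝ)))
    (hf : ∀ x : ℝ, f x = (∏ i ∈ Finset.Icc 1 d, (x + (i : ℝ))) / (d.factorial : ℝ)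
        + m * (∏ i ∈ Finset.Icc 1 d, (x + (i : ℝ) - (k : ℝ))) / (d.factorial : ℝ)) :
    (∀ x : ℝ, g x = 0 → -(d : ℝ) < x ∧ x < (k : ℝ) - 1)
      ∧ ∀ x : ℝ, f x = 0 → -(d : ℝ) + 1 ≤ x ∧ x ≤ (d : ℝ) - 1 := by
  have hm1 : (1:ℝ) ≤ m := by exact_mod_cast hm
  have hd2 : (2:ℝ) ≤ d := by exact_mod_cast hd
  have hk1' : (1:ℝ) ≤ k := by exact_mod_cast hk1
  have hkd' : (k:ℝ) ≤ d := by exact_mod_cast hkd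
  -- reindexing of the first product
  have hA : ∀ x : ℝ, (∏ j ∈ Finset.Icc (d - k + 1) d, (x + (j : ℝ)))
      = ∏ j ∈ Finset.range k, (x + ((d - j : ℕ) : ℝ)) := by
    intro x
    exact Finset.prod_nbij' (fun i => d - i) (fun j => d - j)
      (by intro a ha; simp only [mem_Icc] at ha; simp only [mem_range]; omega)
      (by intro a ha; simp only [mem_range] at ha; simp only [mem_Icc]; omega)
      (by intro a ha; simp only [mem_Icc] at ha; omega)
      (by intro a ha; simp only [mem_range] at ha; omega)
      (by intro a ha; simp only [mem_Icc] at ha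
          congr 2; omega)
  -- P1 : g is positive on [k-1, ∞)
  have P1 : ∀ x : ℝ, (k:ℝ) - 1 ≤ x → 0 < g x := by
    intro x hx
    rw [hg x]
    have h1 : 0 < ∏ j ∈ Finset.Icc (d - k + 1) d, (x + (j : ℝ)) := by
      apply Finset.prod_pos
      intro j hj
      simp only [mem_Icc] at hj
      have : ((d - k + 1 : ℕ) : ℝ) ≤ (j : ℝ) := by exact_mod_cast hj.1
      have hdk : ((d - k + 1 : ℕ) : ℝ) = (d:ℝ) - k + 1 := by
        push_cast [Nat.cast_sub hkd]; ring
      nlinarith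
    have h2 : 0 ≤ ∏ j ∈ Finset.range k, (x - (j : ℝ)) := by
      apply Finset.prod_nonneg
      intro j hj
      simp only [mem_range] at hj
      have : (j:ℝ) ≤ (k:ℝ) - 1 := by
        have : (j:ℝ) + 1 ≤ k := by exact_mod_cast hj
        linarith
      linarith
    have hm0 : (0:ℝ) ≤ m := by linarith
    nlinarith
  -- P3 : g has no zero on (-∞, 1-d)
  have P3 : ∀ x : ℝ, x < 1 - (d:ℝ) → g x ≠ 0 := by
    intro x hx hgx
    rw [hg x, hA x] at hgx
    -- pairwise bound
    have key : ∀ j ∈ Finset.range k, |x + ((d - j : ℕ) : ℝ)| < (j:ℝ) - x := by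
      intro j hj
      simp only [mem_range] at hj
      have hjd : j ≤ d := le_trans (le_of_lt hj) hkd
      have hcast : ((d - j : ℕ) : ℝ) = (d:ℝ) - j := by push_cast [Nat.cast_sub hjd]; ring
      rw [hcast, abs_lt]
      have hj0 : (0:ℝ) ≤ j := Nat.cast_nonneg j
      constructor <;> nlinarith
    have habsA : |∏ j ∈ Finset.range k, (x + ((d - j : ℕ) : ℝ))|
        = ∏ j ∈ Finset.range k, |x + ((d - j : ℕ) : ℝ)| := Finset.abs_prod _ _
    have hBpos : ∀ j ∈ Finset.range k, (0:ℝ) < (j:ℝ) - x := by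
      intro j hj
      have : (0:ℝ) ≤ j := Nat.cast_nonneg j
      linarith
    have hBeq : ∏ j ∈ Finset.range k, (x - (j:ℝ)) = (-1)^k * ∏ j ∈ Finset.range k, ((j:ℝ) - x) := by
      calc ∏ j ∈ Finset.range k, (x - (j:ℝ))
          = ∏ j ∈ Finset.range k, (-1) * ((j:ℝ) - x) := by
            apply Finset.prod_congr rfl; intro j _; ring
        _ = (-1)^k * ∏ j ∈ Finset.range k, ((j:ℝ) - x) := by
            rw [Finset.prod_mul_distrib, Finset.prod_const, Finset.card_range]
    have hlt : ∏ j ∈ Finset.range k, |x + ((d - j : ℕ) : ℝ)|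
        < ∏ j ∈ Finset.range k, ((j:ℝ) - x) := by
      apply prod_lt_prod_aux ⟨0, mem_range.2 (by omega)⟩
      · intro i _; exact abs_nonneg _
      · exact key
    -- from g x = 0 :
    have hAB : ∏ j ∈ Finset.range k, (x + ((d - j : ℕ) : ℝ))
        = -(m * ∏ j ∈ Finset.range k, (x - (j:ℝ))) := by linarith
    have h1 : |∏ j ∈ Finset.range k, (x + ((d - j : ℕ) : ℝ))|
        = m * ∏ j ∈ Finset.range k, ((j:ℝ) - x) := by
      rw [hAB, abs_neg, abs_mul, hBeq, abs_mul, abs_pow, abs_neg, abs_one, one_pow, one_mul]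
      rw [Nat.abs_cast, abs_of_pos (Finset.prod_pos hBpos)]
    have h2 : ∏ j ∈ Finset.range k, ((j:ℝ) - x)
        ≤ m * ∏ j ∈ Finset.range k, ((j:ℝ) - x) := by
      nlinarith [Finset.prod_pos hBpos]
    rw [← habsA, h1] at hlt
    linarith [hlt, h2]
  -- part 1
  have part1 : ∀ x : ℝ, g x = 0 → -(d : ℝ) < x ∧ x < (k : ℝ) - 1 := by
    intro x hx
    constructor
    · by_contra h
      push_neg at h
      exact P3 x (by linarith) hx
    · by_contra h
      push_neg at h
      exact absurd hx (ne_of_gt (P1 x h))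
  refine ⟨part1, ?_⟩
  -- product decompositions
  have E1 : ∀ x : ℝ, (∏ i ∈ Finset.Icc 1 d, (x + (i : ℝ)))
      = (∏ j ∈ Finset.Ioc 0 (d - k), (x + (j : ℝ)))
        * ∏ j ∈ Finset.Icc (d - k + 1) d, (x + (j : ℝ)) := by
    intro x
    have h1 : Finset.Icc 1 d = Finset.Ioc 0 d := by rw [← Finset.Icc_add_one_left_eq_Ioc]; rfl
    have h2 : Finset.Icc (d - k + 1) d = Finset.Ioc (d - k) d := by rw [← Finset.Icc_add_one_left_eq_Ioc]
    rw [h1, h2, Finset.prod_Ioc_consecutive _ (Nat.zero_le _) (Nat.sub_le d k)]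
  have E2 : ∀ x : ℝ, (∏ i ∈ Finset.Icc 1 d, (x + (i : ℝ) - (k : ℝ)))
      = (∏ j ∈ Finset.Ioc 0 (d - k), (x + (j : ℝ)))
        * ∏ j ∈ Finset.range k, (x - (j : ℝ)) := by
    intro x
    have h1 : Finset.Icc 1 d = Finset.Ioc 0 d := by rw [← Finset.Icc_add_one_left_eq_Ioc]; rfl
    rw [h1, ← Finset.prod_Ioc_consecutive (fun i => x + (i:ℝ) - k) (Nat.zero_le k) hkd]
    rw [mul_comm]
    congr 1
    · -- ∏_{Ioc k d} (x + i - k) = ∏_{Ioc 0 (d-k)} (x + j)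
      exact Finset.prod_nbij' (fun i => i - k) (fun j => j + k)
        (by intro a ha; simp only [mem_Ioc] at ha ⊢; omega)
        (by intro a ha; simp only [mem_Ioc] at ha ⊢; omega)
        (by intro a ha; simp only [mem_Ioc] at ha; omega)
        (by intro a ha; simp only [mem_Ioc] at ha; omega)
        (by intro a ha; simp only [mem_Ioc] at ha
            have : ((a - k : ℕ) : ℝ) = (a:ℝ) - k := by
              push_cast [Nat.cast_sub ha.1.le]; ring
            rw [this]; ring)
    · -- ∏_{Ioc 0 k} (x + i - k) = ∏_{range k} (x - j)
      exact Finset.prod_nbij' (fun i => k - i) (fun j => k - j)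
        (by intro a ha; simp only [mem_Ioc] at ha; simp only [mem_range]; omega)
        (by intro a ha; simp only [mem_range] at ha; simp only [mem_Ioc]; omega)
        (by intro a ha; simp only [mem_Ioc] at ha; omega)
        (by intro a ha; simp only [mem_range] at ha; omega)
        (by intro a ha; simp only [mem_Ioc] at ha
            have : ((k - a : ℕ) : ℝ) = (k:ℝ) - a := by
              push_cast [Nat.cast_sub ha.2]; ring
            rw [this]; ring)
  have hfac : (0:ℝ) < (d.factorial : ℝ) := by exact_mod_cast d.factorial_pos
  intro x hx
  rw [hf x, E1 x, E2 x] at hx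
  have hfg : (∏ j ∈ Finset.Ioc 0 (d - k), (x + (j : ℝ))) * g x = 0 := by
    rw [hg x]
    field_simp at hx
    ring_nf at hx ⊢
    linarith [hx]
  rcases mul_eq_zero.1 hfg with hP | hgx
  · -- x = -j for some 1 ≤ j ≤ d - k
    rcases Finset.prod_eq_zero_iff.1 hP with ⟨j, hj, hjx⟩
    simp only [mem_Ioc] at hj
    have hxj : x = -(j:ℝ) := by linarith
    have hj1 : (1:ℝ) ≤ j := by exact_mod_cast hj.1
    have hjle : (j:ℝ) ≤ (d:ℝ) - k := by
      have : (j:ℝ) ≤ ((d - k : ℕ) : ℝ) := by exact_mod_cast hj.2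
      rwa [Nat.cast_sub hkd] at this
    constructor <;> [skip; skip] <;> rw [hxj] <;> linarith
  · obtain ⟨h1, h2⟩ := part1 x hgx
    have h3 : ¬ (x < 1 - (d:ℝ)) := fun h => P3 x h hgx
    push_neg at h3
    constructor <;> linarith
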